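/- Let Q be a Dynkin quiver of arbitrary finite type with height function ξ and i a vertex. Then α_i − Σ_{j : d(i,j)=1, ξ_j − ξ_i = 1} c_{j,i} γ_j^Q = γ_i^Q, where γ_k^Q = (1 − τ_Q)ϖ_k and c_{j,i} = ⟨h_j, α_i⟩ are Cartan matrix entries. -/

import Mathlib

/-- The simple reflection on the weight space associated to the simple root `α i` and the
simple coroot functional `h i`. -/
def srefl {V : Type*} [AddCommGroup V] [Module ℝ V] {ι : Type*}
    (α : ι → V) (h : ι → V →ₗ[ℝ] ℝ) (i : ι) : Function.End V :=
  fun v => v - h i v • α i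

/-- Product of the simple reflections along a word. -/
def wprod {V : Type*} [AddCommGroup V] [Module ℝ V] {ι : Type*}
    (α : ι → V) (h : ι → V →ₗ[ℝ] ℝ) (w : List ι) : Function.End V :=
  (w.map (srefl α h)).prod

section
variable {V : Type*} [AddCommGroup V] [Module ℝ V] {ι : Type*}
  (α : ι → V) (h : ι → V →ₗ[ℝ] ℝ)

lemma wprod_nil (v : V) : wprod α h [] v = v := rfl

lemma wprod_cons (k : ι) (l : List ι) (v : V) :
    wprod α h (k :: l) v = srefl α h k (wprod α h l v) := rfl

lemma wprod_append (a b : List ι) (v : V) :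
    wprod α h (a ++ b) v = wprod α h a (wprod α h b v) := by
  unfold wprod
  rw [List.map_append, List.prod_append]
  rfl

lemma wprod_fix (l : List ι) (x : V) (hx : ∀ k ∈ l, h k x = 0) :
    wprod α h l x = x := by
  induction l with
  | nil => rfl
  | cons k l ih =>
    rw [wprod_cons, ih (fun m hm => hx m (List.mem_cons_of_mem _ hm))]
    simp [srefl, hx k List.mem_cons_self]

lemma wprod_isLinear (l : List ι) : IsLinearMap ℝ (wprod α h l) := by
  induction l with
  | nil => exact ⟨fun a b => rfl, fun r a => rfl⟩
  | cons k l ih =>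
    constructor
    · intro a b
      rw [wprod_cons, wprod_cons, wprod_cons, ih.map_add]
      simp only [srefl, map_add, add_smul]
      abel
    · intro r a
      rw [wprod_cons, wprod_cons, ih.map_smul]
      simp only [srefl, map_smul, smul_sub, smul_smul, smul_eq_mul]

end

/-- For a Dynkin quiver `Q` of arbitrary finite type with height function `ξ` and adapted
Coxeter element `τ_Q`, setting `γ_k^Q = (1 − τ_Q)ϖ_k`, one has
`α_i − ∑_{j : d(i,j)=1, ξ_j − ξ_i = 1} c_{j,i} γ_j^Q = γ_i^Q`. -/
theorem stmt5 {V : Type*} [AddCommGroup V] [Module ℝ V] {ι : Type*} [Fintype ι]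
    [DecidableEq ι]
    (c : ι → ι → ℤ)
    (hdiag : ∀ i, c i i = 2)
    (hoffd : ∀ i j, i ≠ j → c i j ≤ 0)
    (hzsym : ∀ i j, c i j = 0 ↔ c j i = 0)
    (d : ι → ℝ) (hd : ∀ i, 0 < d i)
    (hdc : ∀ i j, d i * (c i j : ℝ) = d j * (c j i : ℝ))
    (hpos : Matrix.PosDef (Matrix.of fun i j => d i * (c i j : ℝ)))
    (α : ι → V) (h : ι → V →ₗ[ℝ] ℝ) (ϖ : ι → V)
    (hhα : ∀ i j, h i (α j) = (c i j : ℝ))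
    (hhϖ : ∀ i j, h i (ϖ j) = if i = j then 1 else 0)
    (ξ : ι → ℤ)
    (hξ : ∀ i j, i ≠ j → c i j ≠ 0 → ξ i = ξ j + 1 ∨ ξ j = ξ i + 1)
    (w : List ι) (hwnd : w.Nodup) (hwall : ∀ i, i ∈ w)
    (hadapt : ∀ i j, i ≠ j → c i j ≠ 0 → ξ i = ξ j + 1 → w.idxOf i < w.idxOf j)
    (i : ι) :
    α i - ∑ j ∈ Finset.univ.filter (fun j => j ≠ i ∧ c j i ≠ 0 ∧ ξ j = ξ i + 1),
        (c j i : ℝ) • (ϖ j - wprod α h w (ϖ j)) =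
      ϖ i - wprod α h w (ϖ i) := by
  classical
  obtain ⟨u, v, rfl⟩ := List.append_of_mem (hwall i)
  -- basic membership facts
  have hnd := hwnd
  rw [List.nodup_append] at hnd
  obtain ⟨hu, hiv, hdisj⟩ := hnd
  have hiu : i ∉ u := fun hiu => hdisj i hiu i List.mem_cons_self rfl
  have hivv : i ∉ v := (List.nodup_cons.1 hiv).1
  have hidx_i : (u ++ i :: v).idxOf i = u.length := by
    rw [List.idxOf_append_of_notMem hiu, List.idxOf_cons_self]
    omega
  -- fixed point lemma for ϖ j when j ∉ l
  have hfixϖ : ∀ (l : List ι) (j : ι), j ∉ l → wprod α h l (ϖ j) = ϖ j := by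
    intro l j hj
    refine wprod_fix α h l _ (fun k hk => ?_)
    rw [hhϖ, if_neg (fun e : k = j => hj (e ▸ hk))]
  -- j ∈ u ↔ stuff
  have hmem_u : ∀ j, j ≠ i → c j i ≠ 0 → ξ j = ξ i + 1 → j ∈ u := by
    intro j hji hcji hξj
    have hlt := hadapt j i hji hcji hξj
    rw [hidx_i] at hlt
    by_contra hju
    have hjw := hwall j
    rw [List.mem_append] at hjw
    have hjv : j ∈ v := by
      rcases hjw with h1 | h1
      · exact absurd h1 hju
      · rcases List.mem_cons.1 h1 with h2 | h2
        · exact absurd h2 hji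
        · exact h2
    rw [List.idxOf_append_of_notMem hju, List.idxOf_cons_ne _ (Ne.symm hji)] at hlt
    omega
  have hu_mem : ∀ j, j ∈ u → j ≠ i ∧ ξ j = ξ i + 1 ∨ c j i = 0 := by
    intro j hju
    by_cases hji : j = i
    · exact absurd (hji ▸ hju) hiu
    by_cases hcji : c j i = 0
    · exact Or.inr hcji
    rcases hξ j i hji hcji with h1 | h1
    · exact Or.inl ⟨hji, h1⟩
    · -- ξ i = ξ j + 1, so i comes before j, contradiction with j ∈ u
      have hlt := hadapt i j (Ne.symm hji) (fun e => hcji ((hzsym i j).1 e)) h1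
      rw [hidx_i, List.idxOf_append_of_mem hju] at hlt
      have : List.idxOf j u < u.length := List.idxOf_lt_length_iff.2 hju
      omega
  -- step 1 : τ ϖ i = ϖ i - (wprod u) (α i)
  have hlinP := wprod_isLinear α h u
  have step1 : wprod α h (u ++ i :: v) (ϖ i) = ϖ i - wprod α h u (α i) := by
    rw [wprod_append, wprod_cons, hfixϖ v i hivv]
    have hsi : srefl α h i (ϖ i) = ϖ i - α i := by
      simp [srefl, hhϖ i i]
    rw [hsi, hlinP.map_sub, hfixϖ u i hiu]
  -- step 2 : wprod α h u (α i) = α i + ∑ k, c k i • (wprod α h u (ϖ k) - ϖ k)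
  have step2 : wprod α h u (α i) = α i + ∑ k, (c k i : ℝ) • (wprod α h u (ϖ k) - ϖ k) := by
    set x : V := α i - ∑ k, (c k i : ℝ) • ϖ k with hx
    have hfix : wprod α h u x = x := by
      refine wprod_fix α h u x (fun m _ => ?_)
      rw [hx, map_sub, map_sum, hhα]
      simp only [map_smul, hhϖ, smul_eq_mul, mul_ite, mul_one, mul_zero]
      simp [Finset.sum_ite_eq]
    have : α i = x + ∑ k, (c k i : ℝ) • ϖ k := by rw [hx]; abel
    calc wprod α h u (α i) = wprod α h u x + ∑ k, (c k i : ℝ) • wprod α h u (ϖ k) := by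
          rw [this, hlinP.map_add]
          congr 1
          rw [show wprod α h u (∑ k : ι, (c k i : ℝ) • ϖ k)
              = (IsLinearMap.mk' (wprod α h u) hlinP) (∑ k : ι, (c k i : ℝ) • ϖ k) from rfl,
            map_sum]
          simp only [map_smul, IsLinearMap.mk'_apply]
          rfl
      _ = α i + ∑ k, (c k i : ℝ) • (wprod α h u (ϖ k) - ϖ k) := by
          rw [hfix, hx]
          simp only [smul_sub, Finset.sum_sub_distrib]
          abel
  -- step 3 : restrict sum to S, and replace P by full wprod
  set S := Finset.univ.filter (fun j => j ≠ i ∧ c j i ≠ 0 ∧ ξ j = ξ i + 1) with hS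
  have step3 : ∑ k, (c k i : ℝ) • (wprod α h u (ϖ k) - ϖ k)
      = ∑ j ∈ S, (c j i : ℝ) • (wprod α h (u ++ i :: v) (ϖ j) - ϖ j) := by
    rw [← Finset.sum_subset (Finset.subset_univ S)]
    · refine Finset.sum_congr rfl (fun j hj => ?_)
      rw [hS, Finset.mem_filter] at hj
      obtain ⟨-, hji, hcji, hξj⟩ := hj
      have hju : j ∈ u := hmem_u j hji hcji hξj
      have hjiv : j ∉ i :: v := by
        intro hjv
        exact hdisj j hju j hjv rfl
      rw [wprod_append, hfixϖ (i :: v) j hjiv]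
    · intro k _ hk
      rw [hS, Finset.mem_filter] at hk
      push_neg at hk
      by_cases hki : k = i
      · rw [hki, hfixϖ u i hiu]; simp
      by_cases hcki : c k i = 0
      · rw [hcki]; simp
      have hξk := hk (Finset.mem_univ k) hki hcki
      have hknu : k ∉ u := by
        intro hku
        rcases hu_mem k hku with ⟨-, h1⟩ | h1
        · exact hξk h1
        · exact hcki h1
      rw [hfixϖ u k hknu]
      simp
  -- finish
  rw [step1, step2, step3]
  have : ∀ j, (c j i : ℝ) • (ϖ j - wprod α h (u ++ i :: v) (ϖ j))
      = -((c j i : ℝ) • (wprod α h (u ++ i :: v) (ϖ j) - ϖ j)) := by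
    intro j; rw [← smul_neg, neg_sub]
  simp only [this, Finset.sum_neg_distrib]
  abel
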